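/- Change of the f-polynomial under edge stellar subdivision: if K is a simplicial complex, e = {a,b} is an edge of K, and w is a vertex not belonging to K, then sd_e(K) is a simplicial complex and, in ℤ[t], f(sd_e(K))(t) = f(K)(t) + t·(1+t)·f(link_K(e))(t). -/

import Mathlib

open Polynomial
open scoped Classical

/-- A (finite) simplicial complex: a family of finite faces closed under subsets. -/
def IsComplex {V : Type*} (K : Finset (Finset V)) : Prop :=
  ∀ F ∈ K, ∀ G ⊆ F, G ∈ K

/-- A flag simplicial complex: any set of vertices that is pairwise connected
by edges of `K` is a face of `K`. -/
def IsFlag {V : Type*} [DecidableEq V] (K : Finset (Finset V)) : Prop :=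
  IsComplex K ∧ ∀ S : Finset V,
    (∀ v ∈ S, ({v} : Finset V) ∈ K) →
    (∀ u ∈ S, ∀ v ∈ S, u ≠ v → ({u, v} : Finset V) ∈ K) →
    S ∈ K

/-- The link of a face `σ` in `K`. -/
noncomputable def link {V : Type*} [DecidableEq V] (K : Finset (Finset V)) (σ : Finset V) :
    Finset (Finset V) :=
  K.filter fun F => Disjoint F σ ∧ F ∪ σ ∈ K

/-- Stellar subdivision of `K` at the face `e` with (fresh) apex `w`:
`sd_e(K) = {F ∈ K : ¬(e ⊆ F)} ∪ {F ∪ S ∪ {w} : F ∈ link_K(e), S ⊊ e}`. -/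
noncomputable def stellarSub {V : Type*} [DecidableEq V] (K : Finset (Finset V))
    (e : Finset V) (w : V) : Finset (Finset V) :=
  (K.filter fun F => ¬ e ⊆ F) ∪
    (link K e).biUnion fun F => e.ssubsets.image fun S => F ∪ S ∪ {w}

/-- The f-polynomial `f(K)(t) = Σ_{F ∈ K} t^|F| = Σ_i f_{i-1}(K) tⁱ`. -/
noncomputable def fPoly {V : Type*} (K : Finset (Finset V)) : ℤ[X] :=
  ∑ F ∈ K, X ^ F.card

/-- The h-polynomial of rank `n`:
`h_n(K)(t) = Σ_{i=0}^{n} f_{i-1}(K) tⁱ (1-t)^{n-i} = Σ_{F ∈ K} t^|F| (1-t)^{n-|F|}`. -/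
noncomputable def hPoly {V : Type*} (K : Finset (Finset V)) (n : ℕ) : ℤ[X] :=
  ∑ F ∈ K, X ^ F.card * (1 - X) ^ (n - F.card)

/-- `faceCount K i = f_{i-1}(K)`, the number of faces of `K` of cardinality `i`. -/
noncomputable def faceCount {V : Type*} (K : Finset (Finset V)) (i : ℕ) : ℕ :=
  (K.filter fun F => F.card = i).card

/-- The boundary complex `∂♢ⁿ` of the `n`-dimensional cross-polytope, with
vertices `a_i = 2i`, `b_i = 2i+1` (`0 ≤ i < n`): all subsets containing at most
one of `a_i, b_i` for each `i`. -/
noncomputable def crossPolytopeBoundary (n : ℕ) : Finset (Finset ℕ) :=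
  (Finset.range (2 * n)).powerset.filter fun F =>
    ∀ i < n, ¬ (2 * i ∈ F ∧ 2 * i + 1 ∈ F)

/-- Complexes obtained from `∂♢ⁿ` by a finite sequence of stellar subdivisions
at edges, each with a fresh apex vertex: the boundary complexes of duals of
2-truncated `n`-cubes. -/
inductive TwoTruncated (n : ℕ) : Finset (Finset ℕ) → Prop
  | base : TwoTruncated n (crossPolytopeBoundary n)
  | step (K : Finset (Finset ℕ)) (a b w : ℕ) :
      TwoTruncated n K → a ≠ b → ({a, b} : Finset ℕ) ∈ K →
      (∀ F ∈ K, w ∉ F) →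
      TwoTruncated n (stellarSub K {a, b} w)

section AuxForStellar
variable {V : Type*} [DecidableEq V]

lemma mem_link_iff' (K : Finset (Finset V)) (e F : Finset V) :
    F ∈ link K e ↔ F ∈ K ∧ Disjoint F e ∧ F ∪ e ∈ K := by
  simp [link]

lemma ssubsets_pair' {a b : V} (hab : a ≠ b) :
    ({a, b} : Finset V).ssubsets = {∅, {a}, {b}} := by
  ext S
  simp only [Finset.mem_ssubsets, Finset.ssubset_iff_subset_ne, Finset.mem_insert,
    Finset.mem_singleton]
  constructor
  · rintro ⟨hsub, hne⟩
    by_cases ha : a ∈ S <;> by_cases hb : b ∈ S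
    · refine absurd (Finset.Subset.antisymm hsub ?_) hne
      intro x hx
      simp only [Finset.mem_insert, Finset.mem_singleton] at hx
      rcases hx with rfl | rfl <;> assumption
    · right; left
      apply Finset.Subset.antisymm
      · intro x hx
        have := hsub hx
        simp only [Finset.mem_insert, Finset.mem_singleton] at this ⊢
        rcases this with rfl | rfl
        · rfl
        · exact absurd hx hb
      · simpa using ha
    · right; right
      apply Finset.Subset.antisymm
      · intro x hx
        have := hsub hx
        simp only [Finset.mem_insert, Finset.mem_singleton] at this ⊢
        rcases this with rfl | rfl
        · exact absurd hx ha
        · rfl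
      · simpa using hb
    · left
      ext x
      simp only [Finset.notMem_empty, iff_false]
      intro hx
      have := hsub hx
      simp only [Finset.mem_insert, Finset.mem_singleton] at this
      rcases this with rfl | rfl
      · exact ha hx
      · exact hb hx
  · rintro (rfl | rfl | rfl)
    · exact ⟨Finset.empty_subset _, Ne.symm (Finset.insert_ne_empty a {b})⟩
    · constructor
      · simp
      · intro h
        have hb : b ∈ ({a} : Finset V) := by rw [h]; simp
        exact hab (Finset.mem_singleton.1 hb).symm
    · constructor
      · simp
      · intro h
        have ha : a ∈ ({b} : Finset V) := by rw [h]; simp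
        exact hab (Finset.mem_singleton.1 ha)

end AuxForStellar

/-- Change of the f-polynomial under edge stellar subdivision:
`sd_e(K)` is a simplicial complex and
`f(sd_e(K))(t) = f(K)(t) + t(1+t) f(link_K(e))(t)`. -/
theorem fPoly_stellarSub {V : Type*} [DecidableEq V] (K : Finset (Finset V)) (a b w : V)
    (hK : IsComplex K) (hab : a ≠ b) (he : ({a, b} : Finset V) ∈ K)
    (hw : ∀ F ∈ K, w ∉ F) :
    IsComplex (stellarSub K {a, b} w) ∧
    fPoly (stellarSub K {a, b} w) =
      fPoly K + X * (1 + X) * fPoly (link K {a, b}) := by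
  set e : Finset V := {a, b} with he_def
  have hwe : w ∉ e := hw e he
  have hlink : ∀ F ∈ link K e, F ∈ K ∧ Disjoint F e ∧ F ∪ e ∈ K := by
    intro F hF; exact (mem_link_iff' K e F).1 hF
  have hrecover : ∀ L ∈ link K e, ∀ S ⊆ e, (L ∪ S ∪ {w}) \ (e ∪ {w}) = L := by
    intro L hL S hS
    obtain ⟨hLK, hLd, -⟩ := hlink L hL
    have hwL : w ∉ L := hw L hLK
    ext x
    simp only [Finset.mem_sdiff, Finset.mem_union, Finset.mem_singleton]
    constructor
    · rintro ⟨(hx | hx) | rfl, hx2⟩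
      · exact hx
      · exact absurd (Or.inl (hS hx)) hx2
      · exact absurd (Or.inr rfl) hx2
    · intro hx
      refine ⟨Or.inl (Or.inl hx), ?_⟩
      rintro (hxe | rfl)
      · exact (Finset.disjoint_left.1 hLd hx) hxe
      · exact hwL hx
  have hScard : ∀ L ∈ link K e, ∀ S ⊆ e, (L ∪ S ∪ {w}).card = L.card + S.card + 1 := by
    intro L hL S hS
    obtain ⟨hLK, hLd, -⟩ := hlink L hL
    have hwL : w ∉ L := hw L hLK
    have hwS : w ∉ S := fun h => hwe (hS h)
    rw [Finset.card_union_of_disjoint, Finset.card_union_of_disjoint]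
    · simp
    · exact hLd.mono_right hS
    · simp only [Finset.disjoint_singleton_right, Finset.mem_union]
      rintro (h | h)
      · exact hwL h
      · exact hwS h
  have hcomplex : IsComplex (stellarSub K e w) := by
    intro F hF G hG
    rw [stellarSub, Finset.mem_union] at hF ⊢
    rcases hF with hF | hF
    · left
      rw [Finset.mem_filter] at hF ⊢
      exact ⟨hK F hF.1 G hG, fun h => hF.2 (h.trans hG)⟩
    · rw [Finset.mem_biUnion] at hF
      obtain ⟨L, hL, hF⟩ := hF
      rw [Finset.mem_image] at hF
      obtain ⟨S, hS, rfl⟩ := hF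
      rw [Finset.mem_ssubsets] at hS
      obtain ⟨hLK, hLd, hLe⟩ := hlink L hL
      by_cases hwG : w ∈ G
      · right
        rw [Finset.mem_biUnion]
        refine ⟨G ∩ L, ?_, ?_⟩
        · rw [mem_link_iff']
          refine ⟨hK L hLK _ Finset.inter_subset_right, hLd.mono_left Finset.inter_subset_right,
            hK (L ∪ e) hLe _ (Finset.union_subset_union_left Finset.inter_subset_right)⟩
        · rw [Finset.mem_image]
          refine ⟨G ∩ S, Finset.mem_ssubsets.2 (lt_of_le_of_lt Finset.inter_subset_right hS), ?_⟩
          apply Finset.Subset.antisymm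
          · intro x hx
            simp only [Finset.mem_union, Finset.mem_inter, Finset.mem_singleton] at hx
            rcases hx with (⟨hxG, _⟩ | ⟨hxG, _⟩) | rfl
            · exact hxG
            · exact hxG
            · exact hwG
          · intro x hx
            have hx' := hG hx
            simp only [Finset.mem_union, Finset.mem_inter, Finset.mem_singleton] at hx' ⊢
            rcases hx' with (h | h) | rfl
            · exact Or.inl (Or.inl ⟨hx, h⟩)
            · exact Or.inl (Or.inr ⟨hx, h⟩)
            · exact Or.inr rfl
      · left
        rw [Finset.mem_filter]
        have hGsub : G ⊆ L ∪ S := by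
          intro x hx
          have hx' := hG hx
          simp only [Finset.mem_union, Finset.mem_singleton] at hx' ⊢
          rcases hx' with (h | h) | rfl
          · exact Or.inl h
          · exact Or.inr h
          · exact absurd hx hwG
        refine ⟨hK (L ∪ e) hLe G (hGsub.trans (Finset.union_subset_union_right hS.subset)), ?_⟩
        intro heG
        apply hS.not_subset
        intro x hxe
        have := hGsub (heG hxe)
        simp only [Finset.mem_union] at this
        rcases this with h | h
        · exact absurd hxe (Finset.disjoint_left.1 hLd h)
        · exact h
  refine ⟨hcomplex, ?_⟩
  have hdisj : Disjoint (K.filter fun F => ¬ e ⊆ F)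
      ((link K e).biUnion fun F => e.ssubsets.image fun S => F ∪ S ∪ {w}) := by
    rw [Finset.disjoint_left]
    intro G hG1 hG2
    rw [Finset.mem_filter] at hG1
    have hwG : w ∉ G := hw G hG1.1
    rw [Finset.mem_biUnion] at hG2
    obtain ⟨L, hL, hG2⟩ := hG2
    rw [Finset.mem_image] at hG2
    obtain ⟨S, hS, rfl⟩ := hG2
    exact hwG (by simp)
  have hsum : fPoly (stellarSub K e w) =
      (∑ F ∈ K.filter fun F => ¬ e ⊆ F, (X : ℤ[X]) ^ F.card) +
      ∑ L ∈ link K e, ∑ S ∈ e.ssubsets, (X : ℤ[X]) ^ (L ∪ S ∪ {w}).card := by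
    rw [fPoly, stellarSub, Finset.sum_union hdisj]
    congr 1
    rw [Finset.sum_biUnion]
    · apply Finset.sum_congr rfl
      intro L hL
      rw [Finset.sum_image]
      intro S hS S' hS' hEq
      rw [Finset.mem_coe, Finset.mem_ssubsets] at hS hS'
      obtain ⟨hLK, hLd, -⟩ := hlink L hL
      have key : ∀ T ⊆ e, (L ∪ T ∪ {w}) ∩ e = T := by
        intro T hT
        ext x
        simp only [Finset.mem_inter, Finset.mem_union, Finset.mem_singleton]
        constructor
        · rintro ⟨(h | h) | rfl, hxe⟩
          · exact absurd hxe (Finset.disjoint_left.1 hLd h)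
          · exact h
          · exact absurd hxe hwe
        · intro h
          exact ⟨Or.inl (Or.inr h), hT h⟩
      rw [← key S hS.subset, ← key S' hS'.subset, show L ∪ S ∪ {w} = L ∪ S' ∪ {w} from hEq]
    · intro L hL L' hL' hne
      simp only [Function.onFun]
      rw [Finset.disjoint_left]
      intro G hG hG'
      rw [Finset.mem_image] at hG hG'
      obtain ⟨S, hS, rfl⟩ := hG
      obtain ⟨S', hS', hEq⟩ := hG'
      rw [Finset.mem_ssubsets] at hS hS'
      apply hne
      rw [← hrecover L hL S hS.subset, ← hEq, hrecover L' hL' S' hS'.subset]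
  have hsecond : (∑ L ∈ link K e, ∑ S ∈ e.ssubsets, (X : ℤ[X]) ^ (L ∪ S ∪ {w}).card) =
      (X + 2 * X ^ 2) * fPoly (link K e) := by
    rw [fPoly, Finset.mul_sum]
    apply Finset.sum_congr rfl
    intro L hL
    have hcard : ∀ S ∈ e.ssubsets,
        (X : ℤ[X]) ^ (L ∪ S ∪ {w}).card = X ^ (L.card + S.card + 1) := by
      intro S hS
      rw [hScard L hL S (Finset.mem_ssubsets.1 hS).subset]
    rw [Finset.sum_congr rfl hcard]
    have hpair : e.ssubsets = {∅, {a}, {b}} := ssubsets_pair' hab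
    rw [hpair]
    have h1 : (∅ : Finset V) ∉ ({{a}, {b}} : Finset (Finset V)) := by
      simp only [Finset.mem_insert, Finset.mem_singleton, not_or]
      exact ⟨Ne.symm (Finset.singleton_ne_empty a), Ne.symm (Finset.singleton_ne_empty b)⟩
    have h2 : ({a} : Finset V) ∉ ({{b}} : Finset (Finset V)) := by
      simp only [Finset.mem_singleton]
      intro h
      exact hab (Finset.singleton_injective h)
    rw [Finset.sum_insert h1, Finset.sum_insert h2, Finset.sum_singleton]
    simp only [Finset.card_empty, Finset.card_singleton]
    ring
  have hcontain : (∑ F ∈ K.filter fun F => e ⊆ F, (X : ℤ[X]) ^ F.card) =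
      X ^ 2 * fPoly (link K e) := by
    rw [fPoly, Finset.mul_sum]
    apply Finset.sum_nbij' (fun F => F \ e) (fun L => L ∪ e)
    · intro F hF
      rw [Finset.mem_filter] at hF
      rw [mem_link_iff']
      refine ⟨hK F hF.1 _ Finset.sdiff_subset, Finset.sdiff_disjoint, ?_⟩
      rw [Finset.sdiff_union_of_subset hF.2]
      exact hF.1
    · intro L hL
      obtain ⟨hLK, hLd, hLe⟩ := hlink L hL
      rw [Finset.mem_filter]
      exact ⟨hLe, Finset.subset_union_right⟩
    · intro F hF
      rw [Finset.mem_filter] at hF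
      exact Finset.sdiff_union_of_subset hF.2
    · intro L hL
      obtain ⟨hLK, hLd, hLe⟩ := hlink L hL
      exact Finset.union_sdiff_cancel_right hLd
    · intro F hF
      rw [Finset.mem_filter] at hF
      have hle := Finset.card_le_card hF.2
      have hc2 : e.card = 2 := Finset.card_pair hab
      have hcard : F.card = (F \ e).card + 2 := by
        rw [Finset.card_sdiff_of_subset hF.2, hc2]
        omega
      rw [hcard, pow_add, mul_comm]
  have hsplit : (∑ F ∈ K.filter fun F => e ⊆ F, (X : ℤ[X]) ^ F.card) +
      (∑ F ∈ K.filter fun F => ¬ e ⊆ F, (X : ℤ[X]) ^ F.card) = fPoly K := by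
    rw [fPoly]
    exact Finset.sum_filter_add_sum_filter_not K _ _
  have hfirst : (∑ F ∈ K.filter fun F => ¬ e ⊆ F, (X : ℤ[X]) ^ F.card) =
      fPoly K - X ^ 2 * fPoly (link K e) := by
    rw [← hsplit, hcontain]; ring
  rw [hsum, hfirst, hsecond]
  ring
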